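/- For every S ⊆ C_s(G,X) and every W ⊆ G × X, the star-construction S*W is second countable and Hausdorff. -/

import Mathlib

open Set Filter Topology TopologicalSpace

namespace Yorke

/-- The space `X̂ = X ∪ {ω}`, encoded as `Option X` with `ω = none`.  Its open sets are
`X̂` itself together with the open sets of `X`. -/
instance hatTopology (X : Type*) [TopologicalSpace X] : TopologicalSpace (Option X) :=
  TopologicalSpace.generateFrom
    ({Set.univ} ∪ {s : Set (Option X) | ∃ u : Set X, IsOpen u ∧ s = (Option.some : X → Option X) '' u})

/-- The space `C_p(G,X)` of partial maps from `G` to `X` (continuous maps defined on a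
nonempty open subset of `G`), encoded via the bijection `μ` with the subspace
`{f : C(G,X̂) | f⁻¹(X) ≠ ∅}` of `C(G,X̂)`; it carries the compact-open topology. -/
abbrev Cp (G X : Type*) [TopologicalSpace G] [TopologicalSpace X] : Type _ :=
  {f : C(G, Option X) // {g : G | f g ≠ none}.Nonempty}

variable {G X : Type*} [TopologicalSpace G] [TopologicalSpace X]

/-- The domain of a partial map. -/
def dom (φ : Cp G X) : Set G := {g : G | φ.1 g ≠ none}

/-- A partial map with nonempty connected domain is maximally defined if every partial map
with nonempty connected domain which extends it is equal to it. -/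
def MaximallyDefined (φ : Cp G X) : Prop :=
  IsConnected (dom φ) ∧
    ∀ ψ : Cp G X, IsConnected (dom ψ) → dom φ ⊆ dom ψ →
      (∀ g ∈ dom φ, φ.1 g = ψ.1 g) → φ = ψ

/-- The space `C_s(G,X)` of maximally defined partial maps, with the subspace topology. -/
abbrev Cs (G X : Type*) [TopologicalSpace G] [TopologicalSpace X] : Type _ :=
  {φ : Cp G X // MaximallyDefined φ}

/-- The orbit `O(φ) = {φ(g) : g ∈ dom φ}`. -/
def orbit (φ : Cs G X) : Set X := {x : X | ∃ g : G, φ.1.1 g = some x}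

/-- The star-construction `S*W = {(g,φ) : φ ∈ S, g ∈ dom φ, (g,φ(g)) ∈ W}`. -/
def star (S : Set (Cs G X)) (W : Set (G × X)) : Set (G × Cs G X) :=
  {p : G × Cs G X | p.2 ∈ S ∧ ∃ x : X, p.2.1.1 p.1 = some x ∧ (p.1, x) ∈ W}

/-- `S` satisfies the compactness axiom if `S*W` is compact for every compact `W`. -/
def CompactnessAxiom (S : Set (Cs G X)) : Prop :=
  ∀ W : Set (G × X), IsCompact W → IsCompact (star S W)

/-- `S` satisfies the existence axiom on `W` if `S*{(t,x)}` is nonempty for all `(t,x) ∈ W`. -/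
def ExistenceAxiom (S : Set (Cs G X)) (W : Set (G × X)) : Prop :=
  ∀ p ∈ W, (star S {p}).Nonempty

/-- `S` satisfies the uniqueness axiom on `W` if `S*{(t,x)}` is empty or a singleton. -/
def UniquenessAxiom (S : Set (Cs G X)) (W : Set (G × X)) : Prop :=
  ∀ p ∈ W, (star S {p}).Subsingleton

section GroupPart

variable {G X : Type*} [TopologicalSpace X] [Group G] [TopologicalSpace G] [IsTopologicalGroup G]

/-- The shift `σ(g,φ)`, the partial map `x ↦ φ(xg)` with domain `(dom φ)g⁻¹`. -/
def shift (g : G) (φ : Cp G X) : Cp G X :=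
  ⟨⟨fun x => φ.1 (x * g), φ.1.continuous.comp (continuous_mul_right g)⟩, by
    obtain ⟨g₀, hg₀⟩ := φ.2
    exact ⟨g₀ * g⁻¹, by simpa [inv_mul_cancel_right] using hg₀⟩⟩

/-- `S ⊆ C_s(G,X)` is `σ`-invariant if `σ(g,φ) ∈ S` for all `g ∈ G`, `φ ∈ S`. -/
def SigmaInvariant (S : Set (Cs G X)) : Prop :=
  ∀ (g : G) (φ : Cs G X), φ ∈ S → ∃ ψ : Cs G X, ψ ∈ S ∧ ψ.1 = shift g φ.1

/-- `A ⊆ X` is weakly invariant with respect to `S` if every `x ∈ A` is the value at the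
identity of some `φ ∈ S` with `O(φ) ⊆ A`. -/
def WeaklyInvariant (S : Set (Cs G X)) (A : Set X) : Prop :=
  ∀ x ∈ A, ∃ φ ∈ S, φ.1.1 (1 : G) = some x ∧ orbit φ ⊆ A

/-- `x` is an equilibrium of `S` if some `φ ∈ S` has `φ(e) = x` and `O(φ) = {x}`. -/
def Equilibrium (S : Set (Cs G X)) (x : X) : Prop :=
  ∃ φ ∈ S, φ.1.1 (1 : G) = some x ∧ orbit φ = {x}

/-- The set of motions `{π(·,x) : x ∈ X} ⊆ C_s(G,X)` of a `G`-action `π`. -/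
def actionSet (π : G × X → X) : Set (Cs G X) :=
  {φ : Cs G X | ∃ x : X, ∀ g : G, φ.1.1 g = some (π (g, x))}

end GroupPart

/-- An isomorphism `<H,k,η> : S*W → S'*W'` of star-constructions: the three maps are
homeomorphisms satisfying `ev ∘ H = k ∘ ev` and `p ∘ H = η ∘ p`. -/
structure StarIso {G X G' X' : Type*} [TopologicalSpace G] [TopologicalSpace X]
    [TopologicalSpace G'] [TopologicalSpace X']
    (S : Set (Cs G X)) (W : Set (G × X)) (S' : Set (Cs G' X')) (W' : Set (G' × X')) where
  H : ↥(star S W) ≃ₜ ↥(star S' W')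
  k : ↥W ≃ₜ ↥W'
  η : ↥S ≃ₜ ↥S'
  ev_comm : ∀ (q : ↥(star S W)) (x : X), q.1.2.1.1 q.1.1 = some x →
      ∀ hW : (q.1.1, x) ∈ W, ∀ x' : X', (H q).1.2.1.1 (H q).1.1 = some x' →
      ((k ⟨(q.1.1, x), hW⟩ : ↥W') : G' × X') = ((H q).1.1, x')
  p_comm : ∀ q : ↥(star S W), (H q).1.2 = ((η ⟨q.1.2, q.2.1⟩ : ↥S') : Cs G' X')

/-- A map `k = (τ,h) : W → W'` preserves phase space if `h(g,x)` does not depend on `g`. -/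
def PreservesPhase {G X G' X' : Type*} [TopologicalSpace G] [TopologicalSpace X]
    [TopologicalSpace G'] [TopologicalSpace X'] {W : Set (G × X)} {W' : Set (G' × X')}
    (k : ↥W → ↥W') : Prop :=
  ∀ w w' : ↥W, (w : G × X).2 = (w' : G × X).2 →
    ((k w : ↥W') : G' × X').2 = ((k w' : ↥W') : G' × X').2

/-- Two continuous maps are isotopic if they are connected by a continuous family of
homeomorphisms parametrized by `[0,1]`. -/
def Isotopic {A B : Type*} [TopologicalSpace A] [TopologicalSpace B] (f₀ f₁ : A → B) : Prop :=
  ∃ F : unitInterval × A → B, Continuous F ∧ (∀ a, F (0, a) = f₀ a) ∧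
    (∀ a, F (1, a) = f₁ a) ∧ ∀ s : unitInterval, IsHomeomorph fun a => F (s, a)

end Yorke

namespace Yorke

section Aux

variable {X : Type*} [TopologicalSpace X]

lemma isOpen_some_image {u : Set X} (hu : IsOpen u) :
    IsOpen ((Option.some : X → Option X) '' u) :=
  TopologicalSpace.isOpen_generateFrom_of_mem (Or.inr ⟨u, hu, rfl⟩)

instance optionSecondCountable [SecondCountableTopology X] :
    SecondCountableTopology (Option X) := by
  refine ⟨⟨insert Set.univ ((Set.image (Option.some : X → Option X)) '' countableBasis X),
    ((countable_countableBasis X).image _).insert _, le_antisymm (le_generateFrom ?_) ?_⟩⟩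
  · rintro s (rfl | ⟨B, hB, rfl⟩)
    · exact isOpen_univ
    · exact isOpen_some_image (isOpen_of_mem_countableBasis hB)
  · refine le_generateFrom ?_
    rintro s (rfl | ⟨u, hu, rfl⟩)
    · exact TopologicalSpace.GenerateOpen.univ
    · rw [(isBasis_countableBasis X).open_eq_sUnion' hu, Set.image_sUnion]
      refine TopologicalSpace.GenerateOpen.sUnion _ ?_
      rintro t ⟨B, ⟨hB, -⟩, rfl⟩
      exact TopologicalSpace.GenerateOpen.basic _
        (Set.mem_insert_iff.mpr (Or.inr ⟨B, hB, rfl⟩))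

variable {G : Type*} [TopologicalSpace G]

open Classical in
/-- Two distinct maximally defined maps whose domains share a point must disagree
(with both values defined) at some point. -/
lemma exists_disagree (φ ψ : Cs G X) (hne : φ ≠ ψ) {g : G}
    (hgφ : g ∈ dom φ.1) (hgψ : g ∈ dom ψ.1) :
    ∃ d : G, ∃ x y : X, φ.1.1 d = some x ∧ ψ.1.1 d = some y ∧ x ≠ y := by
  by_contra hcon
  push_neg at hcon
  have hagree : ∀ a : G, φ.1.1 a ≠ none → ψ.1.1 a ≠ none → φ.1.1 a = ψ.1.1 a := by
    intro a ha hb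
    cases hx : φ.1.1 a with
    | none => exact absurd hx ha
    | some x =>
      cases hy : ψ.1.1 a with
      | none => exact absurd hy hb
      | some y => rw [hcon a x y hx hy]
  -- the glued map
  set f : G → Option X := fun a => if φ.1.1 a ≠ none then φ.1.1 a else ψ.1.1 a with hf
  have hfφ : ∀ a : G, φ.1.1 a ≠ none → f a = φ.1.1 a := fun a ha => if_pos ha
  have hfψ : ∀ a : G, ψ.1.1 a ≠ none → f a = ψ.1.1 a := by
    intro a hb
    by_cases ha : φ.1.1 a ≠ none
    · rw [hf]; simp only [if_pos ha]; exact hagree a ha hb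
    · exact if_neg ha
  have hfnone : ∀ a : G, φ.1.1 a = none → ψ.1.1 a = none → f a = none := by
    intro a ha hb
    simp only [hf, ha, hb, ne_eq, not_true_eq_false, if_false]
  have hcont : Continuous f := by
    refine continuous_generateFrom_iff.mpr ?_
    rintro s (rfl | ⟨u, hu, rfl⟩)
    · exact isOpen_univ
    · have heq : f ⁻¹' ((Option.some : X → Option X) '' u) =
          φ.1.1 ⁻¹' (Option.some '' u) ∪ ψ.1.1 ⁻¹' (Option.some '' u) := by
        ext a
        constructor
        · intro hfa
          by_cases ha : φ.1.1 a ≠ none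
          · left; rwa [Set.mem_preimage, ← hfφ a ha]
          · right
            push_neg at ha
            by_cases hb : ψ.1.1 a ≠ none
            · rwa [Set.mem_preimage, ← hfψ a hb]
            · push_neg at hb
              exfalso
              have hn := hfnone a ha hb
              rw [Set.mem_preimage, hn] at hfa
              obtain ⟨x, -, hx⟩ := hfa
              exact Option.some_ne_none x hx
        · rintro (ha | hb)
          · have h1 : φ.1.1 a ≠ none := by
              rw [Set.mem_preimage] at ha
              obtain ⟨x, -, hx⟩ := ha
              rw [← hx]; exact Option.some_ne_none x
            rwa [Set.mem_preimage, hfφ a h1]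
          · have h1 : ψ.1.1 a ≠ none := by
              rw [Set.mem_preimage] at hb
              obtain ⟨x, -, hx⟩ := hb
              rw [← hx]; exact Option.some_ne_none x
            rwa [Set.mem_preimage, hfψ a h1]
      rw [heq]
      exact ((isOpen_some_image hu).preimage φ.1.1.continuous).union
        ((isOpen_some_image hu).preimage ψ.1.1.continuous)
  have hgφ' : φ.1.1 g ≠ none := hgφ
  have hgψ' : ψ.1.1 g ≠ none := hgψ
  set Ψ : Cp G X := ⟨⟨f, hcont⟩, ⟨g, by
    show f g ≠ none
    rw [hfφ g hgφ']; exact hgφ'⟩⟩ with hΨ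
  have hΨa : ∀ a : G, Ψ.1 a = f a := fun a => rfl
  have hdom : dom Ψ = dom φ.1 ∪ dom ψ.1 := by
    ext a
    simp only [dom, Set.mem_setOf_eq, Set.mem_union, hΨa]
    by_cases ha : φ.1.1 a ≠ none
    · rw [hfφ a ha]
      exact ⟨fun h => Or.inl h, fun _ => ha⟩
    · push_neg at ha
      constructor
      · intro h
        by_cases hb : ψ.1.1 a ≠ none
        · exact Or.inr hb
        · push_neg at hb
          exact absurd (hfnone a ha hb) h
      · rintro (h | h)
        · exact absurd ha h
        · rw [hfψ a h]; exact h
  have hconn : IsConnected (dom Ψ) := by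
    rw [hdom]
    exact IsConnected.union ⟨g, hgφ, hgψ⟩ φ.2.1 ψ.2.1
  have h1 : φ.1 = Ψ := by
    refine φ.2.2 Ψ hconn (by rw [hdom]; exact Set.subset_union_left) ?_
    intro a ha
    rw [hΨa, hfφ a ha]
  have h2 : ψ.1 = Ψ := by
    refine ψ.2.2 Ψ hconn (by rw [hdom]; exact Set.subset_union_right) ?_
    intro a ha
    rw [hΨa, hfψ a ha]
  exact hne (Subtype.ext (h1.trans h2.symm))

end Aux

variable {G X : Type*} [Group G] [TopologicalSpace G] [IsTopologicalGroup G]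
  [LocallyCompactSpace G] [SecondCountableTopology G] [T2Space G]
  [MetricSpace X] [SecondCountableTopology X]

set_option synthInstance.maxHeartbeats 1000000 in
set_option maxHeartbeats 1000000 in
/-- The star-construction `S*W` is second countable and Hausdorff. -/
theorem statement_3 (S : Set (Cs G X)) (W : Set (G × X)) :
    SecondCountableTopology ↥(star S W) ∧ T2Space ↥(star S W) := by
  constructor
  · haveI h1 : SecondCountableTopology C(G, Option X) :=
      ContinuousMap.instSecondCountableTopology
    haveI h2 : SecondCountableTopology (Cp G X) :=
      secondCountableTopology_induced _ _ Subtype.val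
    haveI h3 : SecondCountableTopology (Cs G X) :=
      secondCountableTopology_induced _ _ Subtype.val
    haveI h4 : SecondCountableTopology (G × Cs G X) := inferInstance
    exact secondCountableTopology_induced _ _ Subtype.val
  · constructor
    rintro ⟨⟨g, φ⟩, hq⟩ ⟨⟨g', φ'⟩, hq'⟩ hne
    by_cases hg : g = g'
    · subst hg
      have hφ : φ ≠ φ' := by
        intro h
        exact hne (Subtype.ext (Prod.ext rfl h))
      obtain ⟨x, hx, -⟩ := hq.2
      obtain ⟨x', hx', -⟩ := hq'.2
      have hgφ : g ∈ dom φ.1 := by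
        show φ.1.1 g ≠ none; rw [hx]; exact Option.some_ne_none x
      have hgφ' : g ∈ dom φ'.1 := by
        show φ'.1.1 g ≠ none; rw [hx']; exact Option.some_ne_none x'
      obtain ⟨d, a, b, hda, hdb, hab⟩ := exists_disagree φ φ' hφ hgφ hgφ'
      obtain ⟨u, v, hu, hv, hau, hbv, huv⟩ := t2_separation hab
      have hev : Continuous fun q : ↥(star S W) => (q.1.2.1.1 : C(G, Option X)) :=
        continuous_subtype_val.comp
          (continuous_subtype_val.comp (continuous_snd.comp continuous_subtype_val))
      refine ⟨{q : ↥(star S W) | Set.MapsTo q.1.2.1.1 {d} (Option.some '' u)},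
        {q : ↥(star S W) | Set.MapsTo q.1.2.1.1 {d} (Option.some '' v)}, ?_, ?_, ?_, ?_, ?_⟩
      · exact (ContinuousMap.isOpen_setOf_mapsTo isCompact_singleton
          (isOpen_some_image hu)).preimage hev
      · exact (ContinuousMap.isOpen_setOf_mapsTo isCompact_singleton
          (isOpen_some_image hv)).preimage hev
      · intro e he
        rw [Set.mem_singleton_iff] at he
        subst he
        exact ⟨a, hau, hda.symm⟩
      · intro e he
        rw [Set.mem_singleton_iff] at he
        subst he
        exact ⟨b, hbv, hdb.symm⟩
      · rw [Set.disjoint_left]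
        rintro q h1 h2
        obtain ⟨c, hcu, hc⟩ := h1 rfl
        obtain ⟨c', hcv, hc'⟩ := h2 rfl
        rw [← hc'] at hc
        obtain rfl : c = c' := by exact Option.some.inj hc
        exact Set.disjoint_left.mp huv hcu hcv
    · obtain ⟨u, v, hu, hv, hgu, hgv, huv⟩ := t2_separation hg
      have hc : Continuous fun q : ↥(star S W) => q.1.1 :=
        continuous_fst.comp continuous_subtype_val
      refine ⟨{q : ↥(star S W) | q.1.1 ∈ u}, {q : ↥(star S W) | q.1.1 ∈ v},
        hu.preimage hc, hv.preimage hc, hgu, hgv, ?_⟩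
      rw [Set.disjoint_left]
      intro q h1 h2
      exact Set.disjoint_left.mp huv h1 h2

end Yorke
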